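/- Let α be a nonempty finite type and p : α → ℝ a probability vector. Let f, g : α → ℝ, and let η ≥ 0 and c > 1 be real numbers. Suppose |E_p[f] − E_p[g]| ≤ η, Var_p[g] ≤ Var_p[f], and E_p[|f − g|] ≥ c·η. Then Var_p[f] ≥ ((c − 1)/2)² · η². -/

import Mathlib

private lemma cs_aux {α : Type*} [Fintype α] (p : α → ℝ) (hp : ∀ a, 0 ≤ p a)
    (hp1 : ∑ a, p a = 1) (X : α → ℝ) :
    (∑ a, p a * |X a|) ^ 2 ≤ ∑ a, p a * X a ^ 2 := by
  have h := Finset.sum_mul_sq_le_sq_mul_sq Finset.univ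
    (fun a => Real.sqrt (p a)) (fun a => Real.sqrt (p a) * |X a|)
  have e1 : ∀ a : α, Real.sqrt (p a) * (Real.sqrt (p a) * |X a|) = p a * |X a| := by
    intro a
    rw [← mul_assoc, Real.mul_self_sqrt (hp a)]
  have e2 : ∀ a : α, Real.sqrt (p a) ^ 2 = p a := fun a => Real.sq_sqrt (hp a)
  have e3 : ∀ a : α, (Real.sqrt (p a) * |X a|) ^ 2 = p a * X a ^ 2 := by
    intro a
    rw [mul_pow, Real.sq_sqrt (hp a), sq_abs]
  simp only [e1, e2, e3, hp1, one_mul] at h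
  exact h

/-- If `|E_p[f] − E_p[g]| ≤ η`, `Var_p[g] ≤ Var_p[f]`, and
`E_p[|f − g|] ≥ c·η` with `η ≥ 0` and `c > 1`, then `Var_p[f] ≥ ((c−1)/2)²·η²`. -/
theorem complementary_prover_variance {α : Type*} [Fintype α] [Nonempty α]
    (p : α → ℝ) (hp : ∀ a, 0 ≤ p a) (hp1 : ∑ a, p a = 1)
    (f g : α → ℝ) (η c : ℝ) (hη : 0 ≤ η) (hc : 1 < c)
    (hmean : |(∑ a, p a * f a) - ∑ a, p a * g a| ≤ η)
    (hvar : (∑ a, p a * (g a - ∑ b, p b * g b) ^ 2)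
              ≤ ∑ a, p a * (f a - ∑ b, p b * f b) ^ 2)
    (hdisagree : c * η ≤ ∑ a, p a * |f a - g a|) :
    ((c - 1) / 2) ^ 2 * η ^ 2 ≤ ∑ a, p a * (f a - ∑ b, p b * f b) ^ 2 := by
  set μf := ∑ b, p b * f b with hμf
  set μg := ∑ b, p b * g b with hμg
  set Vf := ∑ a, p a * (f a - μf) ^ 2 with hVf
  set Vg := ∑ a, p a * (g a - μg) ^ 2 with hVg
  have hVf0 : 0 ≤ Vf := Finset.sum_nonneg fun a _ =>
    mul_nonneg (hp a) (sq_nonneg _)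
  -- mean abs deviations
  have h1 : (∑ a, p a * |f a - μf|) ^ 2 ≤ Vf := cs_aux p hp hp1 _
  have h2 : (∑ a, p a * |g a - μg|) ^ 2 ≤ Vg := cs_aux p hp hp1 _
  have sqrt1 : ∑ a, p a * |f a - μf| ≤ Real.sqrt Vf := by
    have := Real.sqrt_le_sqrt h1
    rwa [Real.sqrt_sq (Finset.sum_nonneg fun a _ => mul_nonneg (hp a) (abs_nonneg _))] at this
  have sqrt2 : ∑ a, p a * |g a - μg| ≤ Real.sqrt Vf := by
    have := Real.sqrt_le_sqrt (h2.trans hvar)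
    rwa [Real.sqrt_sq (Finset.sum_nonneg fun a _ => mul_nonneg (hp a) (abs_nonneg _))] at this
  -- triangle: |f - g| ≤ |f - μf| + |g - μg| + |μf - μg|
  have tri : ∑ a, p a * |f a - g a| ≤
      (∑ a, p a * |f a - μf|) + (∑ a, p a * |g a - μg|) + |μf - μg| := by
    have : ∑ a, p a * |f a - g a| ≤
        ∑ a, p a * (|f a - μf| + |g a - μg| + |μf - μg|) := by
      apply Finset.sum_le_sum
      intro a _
      apply mul_le_mul_of_nonneg_left _ (hp a)
      calc |f a - g a| = |(f a - μf) - (g a - μg) + (μf - μg)| := by ring_nf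
        _ ≤ |(f a - μf) - (g a - μg)| + |μf - μg| := abs_add_le _ _
        _ ≤ |f a - μf| + |g a - μg| + |μf - μg| := by
            exact add_le_add (abs_sub _ _) le_rfl
    calc ∑ a, p a * |f a - g a| ≤ _ := this
      _ = (∑ a, p a * |f a - μf|) + (∑ a, p a * |g a - μg|) + |μf - μg| := by
          simp only [mul_add, Finset.sum_add_distrib, ← Finset.sum_mul, hp1, one_mul]
  have key : (c - 1) * η ≤ 2 * Real.sqrt Vf := by
    have : c * η ≤ Real.sqrt Vf + Real.sqrt Vf + η :=
      hdisagree.trans (tri.trans (add_le_add (add_le_add sqrt1 sqrt2) hmean))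
    linarith
  have hsq : ((c - 1) * η) ^ 2 ≤ (2 * Real.sqrt Vf) ^ 2 := by
    apply sq_le_sq' _ key
    nlinarith [mul_nonneg (sub_nonneg.2 hc.le) hη, Real.sqrt_nonneg Vf]
  have : (2 * Real.sqrt Vf) ^ 2 = 4 * Vf := by
    rw [mul_pow, Real.sq_sqrt hVf0]; ring
  nlinarith [hsq]
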